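/- Let μ be a finite Radon measure on ℝ³ with Lebesgue decomposition μ = μ_ac + μ_sc + μ_pp, where μ_pp is the atomic part. Then for every q ∈ (1,∞], limsup_{t→0} t^{(3/2)(1−1/q)} ‖e^{tΔ}μ‖_{L^q(ℝ³)} ≤ C ‖μ_pp‖_{𝓜(ℝ³)} for a constant C depending only on q. -/

import Mathlib

open MeasureTheory ENNReal Filter
open Metric Topology

/-- The squared Euclidean distance `|x - y|²` in `ℝ³`. -/
noncomputable def sqdist (x y : ℝ × ℝ × ℝ) : ℝ :=
  (x.1 - y.1) ^ 2 + (x.2.1 - y.2.1) ^ 2 + (x.2.2 - y.2.2) ^ 2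

/-- The heat extension `e^{tΔ}μ(x) = (4πt)^{-3/2} ∫ exp(-|x-y|²/(4t)) dμ(y)`. -/
noncomputable def heatExt (μ : Measure (ℝ × ℝ × ℝ)) (t : ℝ) (x : ℝ × ℝ × ℝ) : ℝ :=
  (4 * Real.pi * t) ^ (-(3 : ℝ) / 2) * ∫ y, Real.exp (-(sqdist x y) / (4 * t)) ∂μ

example : ProperSpace (ℝ × ℝ × ℝ) := inferInstance

lemma sqdist_nonneg (x y : ℝ × ℝ × ℝ) : 0 ≤ sqdist x y := by unfold sqdist; positivity

lemma sqdist_continuous : Continuous (fun p : (ℝ × ℝ × ℝ) × (ℝ × ℝ × ℝ) => sqdist p.1 p.2) := by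
  unfold sqdist; fun_prop

lemma dist_sq_le_sqdist (x y : ℝ × ℝ × ℝ) : dist x y ^ 2 ≤ sqdist x y := by
  have h1 : dist x y = max |x.1 - y.1| (max |x.2.1 - y.2.1| |x.2.2 - y.2.2|) := by
    rw [Prod.dist_eq, Prod.dist_eq, Real.dist_eq, Real.dist_eq, Real.dist_eq]
  rw [h1]
  unfold sqdist
  rcases max_cases |x.1 - y.1| (max |x.2.1 - y.2.1| |x.2.2 - y.2.2|) with ⟨h, _⟩ | ⟨h, _⟩ <;>
    [skip; rcases max_cases |x.2.1 - y.2.1| |x.2.2 - y.2.2| with ⟨h2, _⟩ | ⟨h2, _⟩] <;>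
    simp only [h] <;> try simp only [h2]
  · nlinarith [sq_abs (x.1 - y.1), sq_nonneg (x.2.1 - y.2.1), sq_nonneg (x.2.2 - y.2.2)]
  · nlinarith [sq_abs (x.2.1 - y.2.1), sq_nonneg (x.1 - y.1), sq_nonneg (x.2.2 - y.2.2)]
  · nlinarith [sq_abs (x.2.2 - y.2.2), sq_nonneg (x.1 - y.1), sq_nonneg (x.2.1 - y.2.1)]

lemma kernel_cont (t : ℝ) (y : ℝ × ℝ × ℝ) :
    Continuous fun x => Real.exp (-(sqdist x y) / (4 * t)) := by
  unfold sqdist; fun_prop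

lemma kernel_cont' (t : ℝ) (x : ℝ × ℝ × ℝ) :
    Continuous fun y => Real.exp (-(sqdist x y) / (4 * t)) := by
  unfold sqdist; fun_prop

lemma kernel_le_one {t : ℝ} (ht : 0 < t) (x y : ℝ × ℝ × ℝ) :
    Real.exp (-(sqdist x y) / (4 * t)) ≤ 1 := by
  rw [Real.exp_le_one_iff]
  exact div_nonpos_of_nonpos_of_nonneg (neg_nonpos.2 (sqdist_nonneg x y)) (by linarith)

lemma kernel_integrable (σ : Measure (ℝ × ℝ × ℝ)) [IsFiniteMeasure σ] {t : ℝ} (ht : 0 < t)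
    (x : ℝ × ℝ × ℝ) : Integrable (fun y => Real.exp (-(sqdist x y) / (4 * t))) σ := by
  refine (integrable_const (1 : ℝ)).mono ((kernel_cont' t x).aestronglyMeasurable) ?_
  filter_upwards with y
  rw [Real.norm_eq_abs, abs_of_nonneg (Real.exp_nonneg _), norm_one]
  exact kernel_le_one ht x y

lemma heatExt_nonneg (σ : Measure (ℝ × ℝ × ℝ)) {t : ℝ} (ht : 0 < t) (x : ℝ × ℝ × ℝ) :
    0 ≤ heatExt σ t x := by
  unfold heatExt
  have h1 : (0:ℝ) < 4 * Real.pi * t := by positivity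
  exact mul_nonneg (Real.rpow_nonneg h1.le _) (integral_nonneg fun y => Real.exp_nonneg _)

lemma heatExt_meas (σ : Measure (ℝ × ℝ × ℝ)) [SFinite σ] (t : ℝ) :
    AEStronglyMeasurable (heatExt σ t) volume := by
  unfold heatExt
  refine (StronglyMeasurable.const_mul ?_ _).aestronglyMeasurable
  have hc : Continuous (fun p : (ℝ × ℝ × ℝ) × (ℝ × ℝ × ℝ) =>
      Real.exp (-(sqdist p.1 p.2) / (4 * t))) := by
    have := sqdist_continuous
    fun_prop
  exact hc.stronglyMeasurable.integral_prod_right'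

lemma heatExt_add (ν μpp : Measure (ℝ × ℝ × ℝ)) [IsFiniteMeasure ν] [IsFiniteMeasure μpp]
    {t : ℝ} (ht : 0 < t) :
    heatExt (ν + μpp) t = fun x => heatExt ν t x + heatExt μpp t x := by
  funext x
  unfold heatExt
  rw [integral_add_measure (kernel_integrable ν ht x) (kernel_integrable μpp ht x)]
  ring

lemma integral_kernel_le_ball (σ : Measure (ℝ × ℝ × ℝ)) [IsFiniteMeasure σ] {t r : ℝ}
    (ht : 0 < t) (hr : 0 ≤ r) (x : ℝ × ℝ × ℝ) :
    ∫ y, Real.exp (-(sqdist x y) / (4 * t)) ∂σ ≤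
      (σ (closedBall x r)).toReal + Real.exp (-r ^ 2 / (4 * t)) * (σ Set.univ).toReal := by
  have hind : Integrable ((closedBall x r).indicator fun _ => (1:ℝ)) σ :=
    (integrable_const 1).indicator measurableSet_closedBall
  have hint2 : Integrable
      (fun y => (closedBall x r).indicator (fun _ => (1:ℝ)) y + Real.exp (-r ^ 2 / (4 * t))) σ :=
    hind.add (integrable_const _)
  refine (integral_mono (kernel_integrable σ ht x) hint2 ?_).trans ?_
  · intro y
    by_cases hy : y ∈ closedBall x r
    · simp only [Set.indicator_of_mem hy]
      have := Real.exp_nonneg (-r ^ 2 / (4 * t))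
      linarith [kernel_le_one ht x y]
    · simp only [Set.indicator_of_notMem hy, zero_add]
      apply Real.exp_le_exp.2
      have hdy : r < dist y x := by simpa [Metric.mem_closedBall] using hy
      have h2 : r ^ 2 ≤ sqdist x y := by
        have h3 := dist_sq_le_sqdist x y
        rw [dist_comm] at hdy
        nlinarith [dist_nonneg (x := x) (y := y)]
      have h4 : (0:ℝ) < 4 * t := by linarith
      rw [div_le_div_iff₀ h4 h4]
      nlinarith
  · rw [integral_add hind (integrable_const _), integral_indicator_const _ measurableSet_closedBall, integral_const]
    simp [smul_eq_mul, mul_comm]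
    exact le_rfl

lemma integral_kernel_le_univ (σ : Measure (ℝ × ℝ × ℝ)) [IsFiniteMeasure σ] {t : ℝ}
    (ht : 0 < t) (x : ℝ × ℝ × ℝ) :
    ∫ y, Real.exp (-(sqdist x y) / (4 * t)) ∂σ ≤ (σ Set.univ).toReal := by
  refine (integral_mono (kernel_integrable σ ht x) (integrable_const 1) ?_).trans ?_
  · exact fun y => kernel_le_one ht x y
  · simp
    exact le_rfl

lemma heatExt_essSup_le (σ : Measure (ℝ × ℝ × ℝ)) [IsFiniteMeasure σ] {t b : ℝ} (ht : 0 < t)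
    (hb : ∀ x, ∫ y, Real.exp (-(sqdist x y) / (4 * t)) ∂σ ≤ b) :
    eLpNormEssSup (heatExt σ t) volume ≤
      ENNReal.ofReal ((4 * Real.pi * t) ^ (-(3 : ℝ) / 2) * b) := by
  apply eLpNormEssSup_le_of_ae_bound
  filter_upwards with x
  rw [Real.norm_eq_abs, abs_of_nonneg (heatExt_nonneg σ ht x)]
  unfold heatExt
  have h1 : (0:ℝ) ≤ (4 * Real.pi * t) ^ (-(3 : ℝ) / 2) := Real.rpow_nonneg (by positivity) _
  exact mul_le_mul_of_nonneg_left (hb x) h1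

lemma gauss1d {t : ℝ} (ht : 0 < t) (c : ℝ) :
    ∫⁻ u : ℝ, ENNReal.ofReal (Real.exp (-(u - c)^2 / (4*t))) =
      ENNReal.ofReal (Real.sqrt (4*Real.pi*t)) := by
  have hb : 0 < 1/(4*t) := by positivity
  have heq : (fun u : ℝ => Real.exp (-(u - c)^2 / (4*t)))
      = fun u => Real.exp (-(1/(4*t)) * (u - c)^2) := by
    funext u; congr 1; field_simp
  have hint : Integrable (fun u : ℝ => Real.exp (-(u - c)^2 / (4*t))) := by
    rw [heq]
    exact (integrable_exp_neg_mul_sq hb).comp_sub_right c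
  rw [← ofReal_integral_eq_lintegral_ofReal hint (ae_of_all _ fun u => Real.exp_nonneg _)]
  congr 1
  rw [heq]
  rw [integral_sub_right_eq_self (fun u => Real.exp (-(1/(4*t)) * u^2)) c]
  rw [integral_gaussian]
  congr 1
  field_simp

lemma heatExt_eLpNorm_one_le (σ : Measure (ℝ × ℝ × ℝ)) [IsFiniteMeasure σ] {t : ℝ}
    (ht : 0 < t) : eLpNorm (heatExt σ t) 1 volume ≤ σ Set.univ := by
  have hπt : (0:ℝ) < 4 * Real.pi * t := by positivity
  set c := (4 * Real.pi * t) ^ (-(3:ℝ)/2) with hc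
  have hc0 : 0 < c := Real.rpow_pos_of_pos hπt _
  rw [eLpNorm_one_eq_lintegral_enorm]
  simp only [enorm_eq_nnnorm]
  have h1 : ∀ x, (‖heatExt σ t x‖₊ : ℝ≥0∞) = ENNReal.ofReal c *
      ∫⁻ y, ENNReal.ofReal (Real.exp (-(sqdist x y) / (4*t))) ∂σ := by
    intro x
    rw [← enorm_eq_nnnorm, ← ofReal_norm, Real.norm_eq_abs,
      abs_of_nonneg (heatExt_nonneg σ ht x)]
    unfold heatExt
    rw [ENNReal.ofReal_mul hc0.le,
      ofReal_integral_eq_lintegral_ofReal (kernel_integrable σ ht x)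
        (ae_of_all _ fun y => Real.exp_nonneg _)]
  simp_rw [h1]
  rw [lintegral_const_mul' _ _ ofReal_ne_top]
  have hker : Continuous (fun p : (ℝ × ℝ × ℝ) × (ℝ × ℝ × ℝ) =>
      Real.exp (-(sqdist p.1 p.2) / (4 * t))) := by
    have := sqdist_continuous; fun_prop
  rw [lintegral_lintegral_swap (f := fun x y =>
      ENNReal.ofReal (Real.exp (-(sqdist x y) / (4*t))))
    (hker.measurable.ennreal_ofReal.aemeasurable)]
  have hinner : ∀ y : ℝ × ℝ × ℝ,
      (∫⁻ x : ℝ × ℝ × ℝ, ENNReal.ofReal (Real.exp (-(sqdist x y) / (4*t)))) =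
        ENNReal.ofReal (Real.sqrt (4*Real.pi*t)) ^ 3 := by
    intro y
    have hfact : ∀ x : ℝ × ℝ × ℝ,
        ENNReal.ofReal (Real.exp (-(sqdist x y) / (4*t))) =
          ENNReal.ofReal (Real.exp (-(x.1 - y.1)^2 / (4*t))) *
            (ENNReal.ofReal (Real.exp (-(x.2.1 - y.2.1)^2 / (4*t))) *
              ENNReal.ofReal (Real.exp (-(x.2.2 - y.2.2)^2 / (4*t)))) := by
      intro x
      rw [← ENNReal.ofReal_mul (Real.exp_nonneg _), ← ENNReal.ofReal_mul (Real.exp_nonneg _),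
        ← Real.exp_add, ← Real.exp_add]
      congr 1
      unfold sqdist
      ring
    simp_rw [hfact]
    rw [Measure.volume_eq_prod]
    have m1 : AEMeasurable (fun u : ℝ => ENNReal.ofReal (Real.exp (-(u - y.1)^2 / (4*t))))
        (volume : Measure ℝ) := by fun_prop
    have m2 : AEMeasurable (fun u : ℝ => ENNReal.ofReal (Real.exp (-(u - y.2.1)^2 / (4*t))))
        (volume : Measure ℝ) := by fun_prop
    have m3 : AEMeasurable (fun u : ℝ => ENNReal.ofReal (Real.exp (-(u - y.2.2)^2 / (4*t))))
        (volume : Measure ℝ) := by fun_prop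
    have m23 : AEMeasurable (fun p : ℝ × ℝ =>
        ENNReal.ofReal (Real.exp (-(p.1 - y.2.1)^2 / (4*t))) *
          ENNReal.ofReal (Real.exp (-(p.2 - y.2.2)^2 / (4*t)))) (volume : Measure (ℝ × ℝ)) := by
      fun_prop
    rw [lintegral_prod_mul m1 m23]
    rw [Measure.volume_eq_prod, lintegral_prod_mul m2 m3]
    rw [gauss1d ht, gauss1d ht, gauss1d ht]
    ring
  simp_rw [hinner]
  rw [lintegral_const]
  rw [show ENNReal.ofReal c * (ENNReal.ofReal (Real.sqrt (4*Real.pi*t)) ^ 3 * σ Set.univ)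
      = (ENNReal.ofReal c * ENNReal.ofReal (Real.sqrt (4*Real.pi*t)) ^ 3) * σ Set.univ by ring]
  have hone : ENNReal.ofReal c * ENNReal.ofReal (Real.sqrt (4*Real.pi*t)) ^ 3 = 1 := by
    rw [← ENNReal.ofReal_pow (Real.sqrt_nonneg _), ← ENNReal.ofReal_mul hc0.le]
    rw [show Real.sqrt (4*Real.pi*t) ^ 3 = ((4*Real.pi*t) ^ ((1:ℝ)/2)) ^ (3:ℕ) by
      rw [Real.sqrt_eq_rpow]]
    rw [← Real.rpow_natCast ((4*Real.pi*t) ^ ((1:ℝ)/2)) 3, ← Real.rpow_mul hπt.le]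
    rw [hc, ← Real.rpow_add hπt]
    norm_num
  rw [hone, one_mul]

lemma interp_lemma {α : Type*} {m : MeasurableSpace α} {μ : Measure α} (f : α → ℝ)
    (hf : AEStronglyMeasurable f μ) {q : ℝ≥0∞} (hq1 : 1 < q) (hq2 : q ≠ ∞) :
    eLpNorm f q μ ≤
      eLpNormEssSup f μ ^ (1 - 1/q.toReal) * eLpNorm f 1 μ ^ (1/q.toReal) := by
  have hp : 1 < q.toReal := by
    rw [← ENNReal.toReal_one]
    exact ENNReal.toReal_strict_mono hq2 hq1
  set p := q.toReal with hpdef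
  have hp0 : (0:ℝ) < p := by linarith
  rw [eLpNorm_eq_lintegral_rpow_enorm_toReal (zero_lt_one.trans hq1).ne' hq2, ← hpdef]
  simp only [enorm_eq_nnnorm]
  set M := eLpNormEssSup f μ with hM
  have key : (∫⁻ x, (‖f x‖₊ : ℝ≥0∞) ^ p ∂μ) ≤ M ^ (p - 1) * ∫⁻ x, (‖f x‖₊ : ℝ≥0∞) ∂μ := by
    rw [← lintegral_const_mul'' (f := fun x => (‖f x‖₊ : ℝ≥0∞)) _ hf.enorm]
    refine lintegral_mono_ae ?_
    filter_upwards [ae_le_eLpNormEssSup (f := f) (μ := μ)] with x hx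
    have : ((‖f x‖₊ : ℝ≥0∞)) ^ p = (‖f x‖₊ : ℝ≥0∞) ^ (p - 1) * (‖f x‖₊ : ℝ≥0∞) ^ (1:ℝ) := by
      rw [← ENNReal.rpow_add_of_nonneg _ _ (by linarith) zero_le_one]
      norm_num
    rw [this, ENNReal.rpow_one]
    exact mul_le_mul_left (ENNReal.rpow_le_rpow hx (by linarith)) _
  calc (∫⁻ x, (‖f x‖₊ : ℝ≥0∞) ^ p ∂μ) ^ (1/p)
      ≤ (M ^ (p - 1) * ∫⁻ x, (‖f x‖₊ : ℝ≥0∞) ∂μ) ^ (1/p) :=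
        ENNReal.rpow_le_rpow key (by positivity)
    _ = M ^ (1 - 1/p) * eLpNorm f 1 μ ^ (1/p) := by
        rw [ENNReal.mul_rpow_of_nonneg _ _ (by positivity), ← ENNReal.rpow_mul,
          eLpNorm_one_eq_lintegral_enorm]
        simp only [enorm_eq_nnnorm]
        congr 2
        field_simp

lemma key_bound {q : ℝ≥0∞} (hq : 1 < q) (σ : Measure (ℝ × ℝ × ℝ)) [IsFiniteMeasure σ]
    {t : ℝ} (ht : 0 < t) (A : ℝ≥0∞)
    (hA : ENNReal.ofReal (t ^ ((3:ℝ)/2)) * eLpNormEssSup (heatExt σ t) volume ≤ A) :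
    ENNReal.ofReal (t ^ ((3/2) * (1 - 1/q.toReal))) * eLpNorm (heatExt σ t) q volume ≤
      A ^ (1 - 1/q.toReal) * (σ Set.univ) ^ (1/q.toReal) := by
  by_cases hqtop : q = ∞
  · subst hqtop
    simpa using hA
  · have hp : 1 < q.toReal := by
      rw [← ENNReal.toReal_one]
      exact ENNReal.toReal_strict_mono hqtop hq
    set p := q.toReal with hpdef
    have hθ0 : (0:ℝ) < 1 - 1/p := by
      rw [sub_pos, div_lt_one (by linarith)]; linarith
    have hθ1 : (0:ℝ) ≤ 1 - 1/p := hθ0.le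
    have h1p : (0:ℝ) < 1/p := by positivity
    calc ENNReal.ofReal (t ^ ((3/2) * (1 - 1/p))) * eLpNorm (heatExt σ t) q volume
        ≤ ENNReal.ofReal (t ^ ((3/2) * (1 - 1/p))) *
            (eLpNormEssSup (heatExt σ t) volume ^ (1 - 1/p) *
              eLpNorm (heatExt σ t) 1 volume ^ (1/p)) := by
          exact mul_le_mul_right (interp_lemma _ (heatExt_meas σ t) hq hqtop) _
      _ = (ENNReal.ofReal (t ^ ((3:ℝ)/2)) * eLpNormEssSup (heatExt σ t) volume) ^ (1 - 1/p) *
            eLpNorm (heatExt σ t) 1 volume ^ (1/p) := by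
          rw [ENNReal.mul_rpow_of_nonneg _ _ hθ1]
          rw [show (3/2 : ℝ) * (1 - 1/p) = (3/2 : ℝ) * (1 - 1/p) from rfl]
          rw [Real.rpow_mul ht.le]
          rw [← ENNReal.ofReal_rpow_of_pos (Real.rpow_pos_of_pos ht _)]
          ring
      _ ≤ A ^ (1 - 1/p) * (σ Set.univ) ^ (1/p) := by
          exact mul_le_mul' (ENNReal.rpow_le_rpow hA hθ1)
            (ENNReal.rpow_le_rpow (heatExt_eLpNorm_one_le σ ht) h1p.le)


lemma uniform_small (ν : Measure (ℝ × ℝ × ℝ)) [IsFiniteMeasure ν] [NullSingletonClass ν] {ε : ℝ}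
    (hε : 0 < ε) : ∃ r : ℝ, 0 < r ∧ ∀ x, ν (closedBall x r) ≤ ENNReal.ofReal ε := by
  by_contra hcon
  push_neg at hcon
  choose x hx using fun n : ℕ => hcon (1/((n:ℝ)+1)) (by positivity)
  -- tightness via big closed balls
  have hU : ⋃ n : ℕ, closedBall (0 : ℝ × ℝ × ℝ) n = Set.univ := by
    ext z
    simp only [Set.mem_iUnion, mem_closedBall, Set.mem_univ, iff_true]
    obtain ⟨n, hn⟩ := exists_nat_ge (dist z 0)
    exact ⟨n, hn⟩
  have hmono : Monotone fun n : ℕ => closedBall (0 : ℝ × ℝ × ℝ) n := fun a b hab =>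
    closedBall_subset_closedBall (by exact_mod_cast hab)
  have htend : Tendsto (fun n : ℕ => ν (closedBall 0 n)) atTop (𝓝 (ν Set.univ)) := by
    have h := tendsto_measure_iUnion_atTop (μ := ν) hmono
    rw [hU] at h
    exact h
  have hlt : ν Set.univ < ν Set.univ + ENNReal.ofReal ε :=
    ENNReal.lt_add_right (measure_ne_top ν _) (ENNReal.ofReal_pos.2 hε).ne'
  have hopen : IsOpen {m : ℝ≥0∞ | ν Set.univ < m + ENNReal.ofReal ε} :=
    isOpen_lt continuous_const (continuous_id.add continuous_const)
  obtain ⟨N, hN⟩ := (htend.eventually (hopen.mem_nhds hlt)).exists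
  have hcompl : ν ((closedBall (0 : ℝ × ℝ × ℝ) N)ᶜ) ≤ ENNReal.ofReal ε := by
    rw [measure_compl measurableSet_closedBall (measure_ne_top ν _)]
    exact tsub_le_iff_right.2 (by rw [add_comm]; exact hN.le)
  have hinter : ∀ n : ℕ, ∃ z, z ∈ closedBall (x n) (1/((n:ℝ)+1)) ∩ closedBall (0:ℝ×ℝ×ℝ) N := by
    intro n
    by_contra h
    push_neg at h
    have hsub : closedBall (x n) (1/((n:ℝ)+1)) ⊆ (closedBall (0:ℝ×ℝ×ℝ) N)ᶜ := by
      intro z hz hz2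
      exact h z ⟨hz, hz2⟩
    exact absurd ((measure_mono hsub).trans hcompl) (not_le.2 (hx n))
  have hxball : ∀ n, x n ∈ closedBall (0:ℝ×ℝ×ℝ) (N+1) := by
    intro n
    obtain ⟨z, hz1, hz2⟩ := hinter n
    rw [mem_closedBall] at *
    have h1 : (1:ℝ)/((n:ℝ)+1) ≤ 1 := by
      rw [div_le_one (by positivity)]; simp
    calc dist (x n) 0 ≤ dist (x n) z + dist z 0 := dist_triangle _ _ _
      _ ≤ 1/((n:ℝ)+1) + N := add_le_add (by rwa [dist_comm]) hz2
      _ ≤ N + 1 := by linarith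
  obtain ⟨a, -, φ, hφ, hconv⟩ :=
    (isCompact_closedBall (0:ℝ×ℝ×ℝ) (N+1)).tendsto_subseq hxball
  have hδ : ∀ δ : ℝ, 0 < δ → ENNReal.ofReal ε ≤ ν (closedBall a δ) := by
    intro δ hδ0
    obtain ⟨n₁, hn₁⟩ := Metric.tendsto_atTop.1 hconv (δ/2) (by positivity)
    obtain ⟨n₂, hn₂⟩ := exists_nat_ge (2/δ)
    set n := max n₁ n₂ with hn
    have hd1 : dist (x (φ n)) a < δ/2 := hn₁ n (le_max_left _ _)
    have hd2 : (1:ℝ)/((φ n : ℝ)+1) ≤ δ/2 := by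
      have h1 : (n₂:ℝ) ≤ φ n := by
        have hle : n ≤ φ n := hφ.le_apply
        have h2 : (n₂ : ℕ) ≤ n := le_max_right _ _
        exact_mod_cast le_trans h2 hle
      have h3 : 2/δ ≤ (φ n : ℝ) := le_trans hn₂ h1
      rw [div_le_div_iff₀ (by positivity) (by positivity)]
      have : 2/δ * δ = 2 := by field_simp
      nlinarith
    have hsub : closedBall (x (φ n)) (1/((φ n : ℝ)+1)) ⊆ closedBall a δ := by
      intro z hz
      rw [mem_closedBall] at *
      calc dist z a ≤ dist z (x (φ n)) + dist (x (φ n)) a := dist_triangle _ _ _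
        _ ≤ δ/2 + δ/2 := add_le_add (hz.trans hd2) hd1.le
        _ = δ := by ring
    exact (hx (φ n)).le.trans (measure_mono hsub)
  have htend2 : Tendsto (fun n : ℕ => ν (closedBall a (1/((n:ℝ)+1)))) atTop
      (𝓝 (ν (⋂ n : ℕ, closedBall a (1/((n:ℝ)+1))))) := by
    refine tendsto_measure_iInter_atTop (fun n => measurableSet_closedBall.nullMeasurableSet)
      (fun m n hmn => closedBall_subset_closedBall ?_) ⟨0, measure_ne_top ν _⟩
    have : (m:ℝ) ≤ n := by exact_mod_cast hmn
    rw [div_le_div_iff₀ (by positivity) (by positivity)]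
    linarith
  have hiInter : (⋂ n : ℕ, closedBall a (1/((n:ℝ)+1))) = {a} := by
    ext z
    simp only [Set.mem_iInter, mem_closedBall, Set.mem_singleton_iff]
    constructor
    · intro h
      have hz : dist z a ≤ 0 :=
        ge_of_tendsto' tendsto_one_div_add_atTop_nhds_zero_nat h
      exact dist_le_zero.1 hz
    · rintro rfl n
      simp [dist_self]; positivity
  rw [hiInter] at htend2
  have hge : ENNReal.ofReal ε ≤ ν {a} :=
    ge_of_tendsto' htend2 fun n => hδ _ (by positivity)
  rw [measure_singleton] at hge
  exact absurd hge (by simp [ENNReal.ofReal_pos.2 hε, (ENNReal.ofReal_pos.2 hε).ne'])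

lemma nu_small (ν : Measure (ℝ × ℝ × ℝ)) [IsFiniteMeasure ν] [NullSingletonClass ν] {δ : ℝ}
    (hδ : 0 < δ) :
    ∀ᶠ t in 𝓝[>] (0:ℝ), ENNReal.ofReal (t ^ ((3:ℝ)/2)) *
      eLpNormEssSup (heatExt ν t) volume ≤ ENNReal.ofReal δ := by
  obtain ⟨r, hr, hball⟩ := uniform_small ν (half_pos hδ)
  have hexp : Tendsto (fun t : ℝ => Real.exp (-r^2/(4*t)) * (ν Set.univ).toReal)
      (𝓝[>] (0:ℝ)) (𝓝 0) := by
    have h1 : Tendsto (fun t : ℝ => -r^2/(4*t)) (𝓝[>] (0:ℝ)) atBot := by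
      have h2 : Tendsto (fun t : ℝ => t⁻¹ * (-r^2/4)) (𝓝[>] (0:ℝ)) atBot :=
        tendsto_inv_nhdsGT_zero.atTop_mul_const_of_neg (by nlinarith [sq_nonneg r, mul_pos hr hr])
      refine h2.congr fun t => ?_
      field_simp
    have h3 := (Real.tendsto_exp_atBot.comp h1).mul_const (ν Set.univ).toReal
    simpa using h3
  have hev : ∀ᶠ t in 𝓝[>] (0:ℝ),
      Real.exp (-r^2/(4*t)) * (ν Set.univ).toReal < δ/2 :=
    hexp.eventually_lt_const (half_pos hδ)
  filter_upwards [self_mem_nhdsWithin, hev] with t ht hsm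
  rw [Set.mem_Ioi] at ht
  have hπt : (0:ℝ) < 4 * Real.pi * t := by positivity
  set c := (4 * Real.pi * t) ^ (-(3:ℝ)/2) with hc
  have hc0 : 0 < c := Real.rpow_pos_of_pos hπt _
  set b : ℝ := δ/2 + Real.exp (-r^2/(4*t)) * (ν Set.univ).toReal with hb
  have hb0 : 0 < b := by
    have h5 : 0 ≤ Real.exp (-r^2/(4*t)) * (ν Set.univ).toReal :=
      mul_nonneg (Real.exp_nonneg _) ENNReal.toReal_nonneg
    rw [hb]
    linarith [half_pos hδ]
  have hbound : ∀ x, ∫ y, Real.exp (-(sqdist x y) / (4 * t)) ∂ν ≤ b := by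
    intro x
    refine (integral_kernel_le_ball ν ht hr.le x).trans ?_
    rw [hb]
    gcongr
    exact ENNReal.toReal_le_of_le_ofReal (half_pos hδ).le (hball x)
  have hess := heatExt_essSup_le ν ht hbound
  calc ENNReal.ofReal (t ^ ((3:ℝ)/2)) * eLpNormEssSup (heatExt ν t) volume
      ≤ ENNReal.ofReal (t ^ ((3:ℝ)/2)) * ENNReal.ofReal (c * b) :=
        mul_le_mul_right hess _
    _ = ENNReal.ofReal (t ^ ((3:ℝ)/2) * c * b) := by
        rw [← ENNReal.ofReal_mul (Real.rpow_nonneg ht.le _), mul_assoc]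
    _ ≤ ENNReal.ofReal δ := by
        apply ENNReal.ofReal_le_ofReal
        have hkey : t ^ ((3:ℝ)/2) * c ≤ 1 := by
          rw [hc, show (4:ℝ) * Real.pi * t = (4 * Real.pi) * t by ring,
            Real.mul_rpow (by positivity) ht.le]
          have h4 : t ^ ((3:ℝ)/2) * ((4*Real.pi) ^ (-(3:ℝ)/2) * t ^ (-(3:ℝ)/2))
              = (4*Real.pi) ^ (-(3:ℝ)/2) := by
            rw [show t ^ ((3:ℝ)/2) * ((4*Real.pi) ^ (-(3:ℝ)/2) * t ^ (-(3:ℝ)/2))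
                = (4*Real.pi) ^ (-(3:ℝ)/2) * (t ^ ((3:ℝ)/2) * t ^ (-(3:ℝ)/2)) by ring,
              ← Real.rpow_add ht]
            norm_num
          rw [h4]
          exact Real.rpow_le_one_of_one_le_of_nonpos (by nlinarith [Real.pi_gt_three]) (by norm_num)
        have hbδ : b ≤ δ := by rw [hb]; linarith
        have hnn : 0 ≤ t ^ ((3:ℝ)/2) * c := mul_nonneg (Real.rpow_nonneg ht.le _) hc0.le
        nlinarith

lemma t_c_le_one {t : ℝ} (ht : 0 < t) :
    t ^ ((3:ℝ)/2) * (4 * Real.pi * t) ^ (-(3:ℝ)/2) ≤ 1 := by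
  rw [show (4:ℝ) * Real.pi * t = (4 * Real.pi) * t by ring,
    Real.mul_rpow (by positivity) ht.le]
  have h4 : t ^ ((3:ℝ)/2) * ((4*Real.pi) ^ (-(3:ℝ)/2) * t ^ (-(3:ℝ)/2))
      = (4*Real.pi) ^ (-(3:ℝ)/2) := by
    rw [show t ^ ((3:ℝ)/2) * ((4*Real.pi) ^ (-(3:ℝ)/2) * t ^ (-(3:ℝ)/2))
        = (4*Real.pi) ^ (-(3:ℝ)/2) * (t ^ ((3:ℝ)/2) * t ^ (-(3:ℝ)/2)) by ring,
      ← Real.rpow_add ht]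
    norm_num
  rw [h4]
  exact Real.rpow_le_one_of_one_le_of_nonpos (by nlinarith [Real.pi_gt_three]) (by norm_num)

lemma mpp_bound (σ : Measure (ℝ × ℝ × ℝ)) [IsFiniteMeasure σ] {t : ℝ} (ht : 0 < t) :
    ENNReal.ofReal (t ^ ((3:ℝ)/2)) * eLpNormEssSup (heatExt σ t) volume ≤ σ Set.univ := by
  have hπt : (0:ℝ) < 4 * Real.pi * t := by positivity
  set c := (4 * Real.pi * t) ^ (-(3:ℝ)/2) with hc
  have hc0 : 0 < c := Real.rpow_pos_of_pos hπt _
  have hess := heatExt_essSup_le σ ht (integral_kernel_le_univ σ ht)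
  calc ENNReal.ofReal (t ^ ((3:ℝ)/2)) * eLpNormEssSup (heatExt σ t) volume
      ≤ ENNReal.ofReal (t ^ ((3:ℝ)/2)) * ENNReal.ofReal (c * (σ Set.univ).toReal) :=
        mul_le_mul_right hess _
    _ = ENNReal.ofReal (t ^ ((3:ℝ)/2) * c * (σ Set.univ).toReal) := by
        rw [← ENNReal.ofReal_mul (Real.rpow_nonneg ht.le _), mul_assoc]
    _ ≤ ENNReal.ofReal ((σ Set.univ).toReal) := by
        apply ENNReal.ofReal_le_ofReal
        exact mul_le_of_le_one_left ENNReal.toReal_nonneg (t_c_le_one ht)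
    _ = σ Set.univ := ENNReal.ofReal_toReal (measure_ne_top σ _)

lemma theta_pos {q : ℝ≥0∞} (hq : 1 < q) : 0 < 1 - 1/q.toReal := by
  by_cases hqtop : q = ∞
  · subst hqtop; simp
  · have hp : 1 < q.toReal := by
      rw [← ENNReal.toReal_one]
      exact ENNReal.toReal_strict_mono hqtop hq
    rw [sub_pos, div_lt_one (by linarith)]
    linarith

lemma rpow_theta_mul {m : ℝ≥0∞} (hm : m ≠ ∞) {q : ℝ≥0∞} (hq : 1 < q) :
    m ^ (1 - 1/q.toReal) * m ^ (1/q.toReal) ≤ m := by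
  by_cases hm0 : m = 0
  · subst hm0
    rw [ENNReal.zero_rpow_of_pos (theta_pos hq)]
    simp
  · rw [← ENNReal.rpow_add _ _ hm0 hm]
    norm_num

/-- A measure is purely atomic if it is a countable sum of weighted Dirac masses. -/
def IsPurelyAtomic (ν : Measure (ℝ × ℝ × ℝ)) : Prop :=
  ∃ (s : ℕ → ℝ × ℝ × ℝ) (c : ℕ → ℝ≥0∞), ν = Measure.sum fun n => c n • Measure.dirac (s n)

/-- For a finite measure `μ = ν + μ_pp` on `ℝ³` (with `ν = μ_ac + μ_sc` the non-atomic
part and `μ_pp` the atomic part of the Lebesgue decomposition), for every `q ∈ (1,∞]`: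
`limsup_{t→0} t^{(3/2)(1-1/q)} ‖e^{tΔ}μ‖_{L^q(ℝ³)} ≤ C ‖μ_pp‖`, `C` depending only on `q`. -/
theorem heatExt_limsup_le_atomic_part (q : ℝ≥0∞) (hq : 1 < q) :
    ∃ C : ℝ, 0 < C ∧ ∀ ν μpp : Measure (ℝ × ℝ × ℝ), IsFiniteMeasure ν →
      IsFiniteMeasure μpp → NoAtoms ν → IsPurelyAtomic μpp →
        Filter.limsup
            (fun t : ℝ =>
              ENNReal.ofReal (t ^ ((3 / 2) * (1 - 1 / q.toReal))) *
                eLpNorm (heatExt (ν + μpp) t) q volume)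
            (nhdsWithin 0 (Set.Ioi 0)) ≤
          ENNReal.ofReal C * μpp Set.univ := by
  refine ⟨1, one_pos, ?_⟩
  intro ν μpp hν hμpp hna _
  haveI := hν; haveI := hμpp; haveI : NullSingletonClass ν := hna
  have hθ0 : 0 < 1 - 1/q.toReal := theta_pos hq
  set m := μpp Set.univ with hmdef
  have hm : m ≠ ∞ := measure_ne_top μpp _
  rw [show ENNReal.ofReal 1 * m = m by simp]
  refine ENNReal.le_of_forall_pos_le_add fun ε hε hfin => ?_
  refine Filter.limsup_le_of_le (by isBoundedDefault) ?_
  have herr : (0:ℝ) < (ε:ℝ) := hε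
  set B := (ν Set.univ) ^ (1/q.toReal) with hB
  have hBfin : B ≠ ∞ :=
    (ENNReal.rpow_lt_top_of_nonneg (by positivity) (measure_ne_top ν _)).ne
  set b := B.toReal with hbdef
  have hb0 : (0:ℝ) ≤ b := ENNReal.toReal_nonneg
  set δ := ((ε:ℝ) / (b+1)) ^ ((1 - 1/q.toReal)⁻¹ : ℝ) with hδdef
  have hδ0 : 0 < δ := Real.rpow_pos_of_pos (by positivity) _
  have hδθ : ENNReal.ofReal δ ^ (1 - 1/q.toReal) * B ≤ (ε : ℝ≥0∞) := by
    rw [ENNReal.ofReal_rpow_of_pos hδ0, hδdef, ← Real.rpow_mul (by positivity),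
      inv_mul_cancel₀ hθ0.ne', Real.rpow_one]
    have hBb : B = ENNReal.ofReal b := (ENNReal.ofReal_toReal hBfin).symm
    rw [hBb, ← ENNReal.ofReal_mul (by positivity)]
    have hle : (ε:ℝ)/(b+1) * b ≤ (ε:ℝ) := by
      rw [div_mul_eq_mul_div, div_le_iff₀ (by positivity)]
      nlinarith
    calc ENNReal.ofReal ((ε:ℝ)/(b+1) * b) ≤ ENNReal.ofReal (ε:ℝ) :=
          ENNReal.ofReal_le_ofReal hle
      _ = (ε : ℝ≥0∞) := ENNReal.ofReal_coe_nnreal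
  filter_upwards [self_mem_nhdsWithin, nu_small ν hδ0] with t ht hνsm
  rw [Set.mem_Ioi] at ht
  have hsplit : eLpNorm (heatExt (ν + μpp) t) q volume ≤
      eLpNorm (heatExt ν t) q volume + eLpNorm (heatExt μpp t) q volume := by
    rw [heatExt_add ν μpp ht]
    exact eLpNorm_add_le (heatExt_meas ν t) (heatExt_meas μpp t) hq.le
  have hterm1 := key_bound hq ν ht (ENNReal.ofReal δ) hνsm
  have hterm2 := key_bound hq μpp ht m (mpp_bound μpp ht)
  calc ENNReal.ofReal (t ^ ((3 / 2) * (1 - 1 / q.toReal))) *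
        eLpNorm (heatExt (ν + μpp) t) q volume
      ≤ ENNReal.ofReal (t ^ ((3 / 2) * (1 - 1 / q.toReal))) *
          (eLpNorm (heatExt ν t) q volume + eLpNorm (heatExt μpp t) q volume) :=
        mul_le_mul_right hsplit _
    _ = ENNReal.ofReal (t ^ ((3 / 2) * (1 - 1 / q.toReal))) * eLpNorm (heatExt ν t) q volume
          + ENNReal.ofReal (t ^ ((3 / 2) * (1 - 1 / q.toReal))) *
              eLpNorm (heatExt μpp t) q volume := mul_add _ _ _
    _ ≤ (ENNReal.ofReal δ ^ (1 - 1/q.toReal) * (ν Set.univ) ^ (1/q.toReal))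
          + (m ^ (1 - 1/q.toReal) * m ^ (1/q.toReal)) := add_le_add hterm1 hterm2
    _ ≤ (ε : ℝ≥0∞) + m := add_le_add hδθ (rpow_theta_mul hm hq)
    _ = m + (ε : ℝ≥0∞) := add_comm _ _
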